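/- arXiv:1009.2292 — 4 statements merged into one kernel-verified Lean document; each statement's English description precedes it below -/
import Mathlib

section
/- Let G be a domain in the triangular lattice X and let H = int(G) be its set of interior points. Then G equals the union of the closed balls B₁(q) in X of radius 1 over all q in H; in particular, the set of interior points determines the domain G completely. -/
/-!
Common framework: subgraphs of an ambient simple graph are modelled as vertex sets
with the induced graph structure (this captures condition (iv): domains are induced
subgraphs). Spheres, curvature, interior/boundary points, domains, smooth domains,
simple connectivity, Euler characteristic, and the triangular lattice `tri`.
-/

namespace TriGB

variable {V : Type*}

/-- The subgraph of `G` induced on the vertex set `T`, as a graph on the ambient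
vertex type (vertices outside `T` are isolated). -/
def restrict (G : SimpleGraph V) (T : Set V) : SimpleGraph V where
  Adj a b := a ∈ T ∧ b ∈ T ∧ G.Adj a b
  symm := ⟨fun _ _ ⟨ha, hb, h⟩ => ⟨hb, ha, h.symm⟩⟩
  loopless := ⟨fun a ⟨_, _, h⟩ => G.loopless.irrefl a h⟩

/-- The neighbours of `p` lying inside `T` (the vertex set of the unit sphere of `p`
in the subgraph induced on `T`, for `p ∈ T`). -/
def nbrs (G : SimpleGraph V) (T : Set V) (p : V) : Set V := {q | q ∈ T ∧ G.Adj p q}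

/-- The vertex set of the sphere of radius `r` around `p` in the subgraph induced on `T`:
points of `T` at graph distance `r` from `p` within that subgraph. -/
def sphVerts (G : SimpleGraph V) (T : Set V) (p : V) (r : ℕ) : Set V :=
  {q | q ∈ T ∧ (restrict G T).Reachable p q ∧ (restrict G T).dist p q = r}

/-- The vertex set of the ball of radius `r` around `p` in the subgraph induced on `T`. -/
def ballVerts (G : SimpleGraph V) (T : Set V) (p : V) (r : ℕ) : Set V :=
  {q | q ∈ T ∧ (restrict G T).Reachable p q ∧ (restrict G T).dist p q ≤ r}

/-- The edges of the sphere of radius `r` around `p`: edges of the (induced) subgraph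
joining two vertices at distance `r` from `p`. -/
def sphEdges (G : SimpleGraph V) (T : Set V) (p : V) (r : ℕ) : Set (Sym2 V) :=
  {e | ∃ a b, e = s(a, b) ∧ a ∈ sphVerts G T p r ∧ b ∈ sphVerts G T p r ∧ G.Adj a b}

/-- The arc length `|S_r(p)|`: the number of edges of the sphere of radius `r`. -/
noncomputable def arcLen (G : SimpleGraph V) (T : Set V) (p : V) (r : ℕ) : ℕ :=
  (sphEdges G T p r).ncard

/-- The (second order Puiseux) curvature `K(p) = 2|S₁(p)| - |S₂(p)|`. -/
noncomputable def curv (G : SimpleGraph V) (T : Set V) (p : V) : ℤ :=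
  2 * (arcLen G T p 1 : ℤ) - (arcLen G T p 2 : ℤ)

/-- `p` is an interior point of `T`: its unit sphere within `T` coincides with its
unit sphere in the ambient graph (all neighbours, with all edges between them,
lie in `T`; in the induced model this means all ambient neighbours belong to `T`). -/
def IsInteriorPt (G : SimpleGraph V) (T : Set V) (p : V) : Prop :=
  p ∈ T ∧ ∀ q, G.Adj p q → q ∈ T

/-- `p` is a boundary point of `T`: a non-interior point of `T` adjacent to an
interior point. -/
def IsBoundaryPt (G : SimpleGraph V) (T : Set V) (p : V) : Prop :=
  p ∈ T ∧ ¬ IsInteriorPt G T p ∧ ∃ q, G.Adj p q ∧ IsInteriorPt G T q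

/-- The set of interior points of `T`. -/
def interiorSet (G : SimpleGraph V) (T : Set V) : Set V := {p | IsInteriorPt G T p}

/-- The set of boundary points of `T`. -/
def boundarySet (G : SimpleGraph V) (T : Set V) : Set V := {p | IsBoundaryPt G T p}

/-- `T` is a one-dimensional graph: every vertex of `T` has a nonempty and edgeless
unit sphere within `T`. -/
def OneDimSet (G : SimpleGraph V) (T : Set V) : Prop :=
  ∀ p ∈ T, (nbrs G T p).Nonempty ∧ ∀ q ∈ nbrs G T p, ∀ r ∈ nbrs G T p, ¬ G.Adj q r

/-- `p` is a two-dimensional point of `T`: its unit sphere within `T` is a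
one-dimensional graph. -/
def TwoDimPt (G : SimpleGraph V) (T : Set V) (p : V) : Prop :=
  OneDimSet G (nbrs G T p)

/-- A domain: (i) two-dimensional, (ii) every vertex interior or boundary,
(iii) the boundary points form a one-dimensional graph, (iv) induced (built into
the model), (v) interior points sharing a common boundary point are adjacent or
both adjacent to a third interior point. -/
def IsDomain (G : SimpleGraph V) (T : Set V) : Prop :=
  (∀ p ∈ T, TwoDimPt G T p) ∧
  (∀ p ∈ T, IsInteriorPt G T p ∨ IsBoundaryPt G T p) ∧
  OneDimSet G (boundarySet G T) ∧
  (∀ p q, IsInteriorPt G T p → IsInteriorPt G T q → p ≠ q →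
    (∃ b, IsBoundaryPt G T b ∧ G.Adj p b ∧ G.Adj q b) →
    (G.Adj p q ∨ ∃ r, IsInteriorPt G T r ∧ r ≠ p ∧ r ≠ q ∧ G.Adj p r ∧ G.Adj q r))

/-- A smooth domain: a domain whose complement is also a domain. -/
def IsSmoothDomain (G : SimpleGraph V) (T : Set V) : Prop :=
  IsDomain G T ∧ IsDomain G Tᶜ

/-- A closed loop in `T`: a cyclic sequence of points of `T` such that consecutive
points are equal or adjacent (curves are loops; trivial loops are constant). -/
def IsLoopIn (G : SimpleGraph V) (T : Set V) {n : ℕ} (x : Fin (n + 1) → V) : Prop :=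
  (∀ i, x i ∈ T) ∧ ∀ i, x i = x (i + 1) ∨ G.Adj (x i) (x (i + 1))

/-- An elementary deformation step between loops in `T`: exactly one point moves,
by distance `1`. -/
def LoopStep (G : SimpleGraph V) (T : Set V) {n : ℕ} (x y : Fin (n + 1) → V) : Prop :=
  IsLoopIn G T x ∧ IsLoopIn G T y ∧ ∃ j, G.Adj (x j) (y j) ∧ ∀ i, i ≠ j → x i = y i

/-- `T` is simply connected: every closed loop of interior points can be deformed,
by finitely many elementary steps within the interior, to a trivial (constant) loop. -/
def SimplyConnected (G : SimpleGraph V) (T : Set V) : Prop :=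
  ∀ (n : ℕ) (x : Fin (n + 1) → V), IsLoopIn G (interiorSet G T) x →
    ∃ c : V, Relation.ReflTransGen (LoopStep G (interiorSet G T)) x (fun _ => c)

/-- The edges of the subgraph induced on `T`. -/
def edgesOf (G : SimpleGraph V) (T : Set V) : Set (Sym2 V) :=
  {e | ∃ a b, e = s(a, b) ∧ a ∈ T ∧ b ∈ T ∧ G.Adj a b}

/-- The (triangular) faces of the subgraph induced on `T`: triples of mutually
adjacent vertices of `T`. -/
def facesOf (G : SimpleGraph V) (T : Set V) : Set (Finset V) :=
  {t | t.card = 3 ∧ ↑t ⊆ T ∧ ∀ a ∈ t, ∀ b ∈ t, a ≠ b → G.Adj a b}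

/-- The Euler characteristic `χ = v - e + f`. -/
noncomputable def euler (G : SimpleGraph V) (T : Set V) : ℤ :=
  (T.ncard : ℤ) - ((edgesOf G T).ncard : ℤ) + ((facesOf G T).ncard : ℤ)

/-- The total boundary curvature of a domain. -/
noncomputable def totalCurv (G : SimpleGraph V) (T : Set V) : ℤ :=
  ∑ᶠ p ∈ boundarySet G T, curv G T p

/-- The ball of radius 1 around `q` in the ambient graph. -/
def ball1 (G : SimpleGraph V) (q : V) : Set V := insert q (G.neighborSet q)

/-- `T` is a cycle (a simple closed one-dimensional graph): nonempty, one-dimensional,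
connected, and every vertex has exactly two neighbours within `T`. -/
def IsCycleSet (G : SimpleGraph V) (T : Set V) : Prop :=
  T.Nonempty ∧ OneDimSet G T ∧ (∀ a ∈ T, ∀ b ∈ T, (restrict G T).Reachable a b) ∧
  ∀ q ∈ T, (nbrs G T q).ncard = 2

/-- For a general graph: the number of edges of the unit sphere of `g` (the subgraph
induced on the neighbours of `g`). -/
noncomputable def sphereEdgeCount (G : SimpleGraph V) (g : V) : ℕ :=
  (edgesOf G (G.neighborSet g)).ncard

/-- The boundary points of a general graph: vertices whose unit sphere is
one-dimensional but not closed (not a cycle). -/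
def boundaryVerts (G : SimpleGraph V) : Set V :=
  {g | OneDimSet G (G.neighborSet g) ∧ ¬ IsCycleSet G (G.neighborSet g)}

open Classical in
/-- The combinatorial Puiseux curvature: `6 - |S₁(g)|` at interior points (unit sphere
a cycle) and `3 - |S₁(g)|` at boundary points. -/
noncomputable def K1 (G : SimpleGraph V) (g : V) : ℤ :=
  if IsCycleSet G (G.neighborSet g) then 6 - (sphereEdgeCount G g : ℤ)
  else 3 - (sphereEdgeCount G g : ℤ)

/-- `A` is a connected component of the subgraph induced on `U`. -/
def IsComponentOf (G : SimpleGraph V) (A U : Set V) : Prop :=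
  A.Nonempty ∧ A ⊆ U ∧ (∀ a ∈ A, ∀ b ∈ A, (restrict G A).Reachable a b) ∧
  ∀ a ∈ A, ∀ b ∈ U, G.Adj a b → b ∈ A

/-- The six unit directions of the triangular lattice. -/
def hexDirs : Set (ℤ × ℤ) := {(1, 0), (-1, 0), (0, 1), (0, -1), (1, -1), (-1, 1)}

lemma neg_mem_hexDirs {d : ℤ × ℤ} (hd : d ∈ hexDirs) : -d ∈ hexDirs := by
  simp only [hexDirs, Set.mem_insert_iff, Set.mem_singleton_iff] at hd ⊢
  rcases hd with rfl | rfl | rfl | rfl | rfl | rfl <;> simp [Prod.ext_iff]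

/-- The triangular lattice: the graph on `ℤ²` in which `(k,l)` is adjacent to
`(k±1,l)`, `(k,l±1)`, `(k+1,l-1)`, `(k-1,l+1)`. -/
def tri : SimpleGraph (ℤ × ℤ) where
  Adj p q := p - q ∈ hexDirs
  symm := by
    constructor
    intro p q h
    show q - p ∈ hexDirs
    rw [show q - p = -(p - q) by ring]
    exact neg_mem_hexDirs h
  loopless := by
    constructor
    intro p h
    simp only [sub_self, hexDirs, Set.mem_insert_iff, Set.mem_singleton_iff] at h
    rcases h with h | h | h | h | h | h <;> simp [Prod.ext_iff] at h


/-- a domain `G` in the triangular lattice is the union of the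
radius-one balls in `X` around its interior points; in particular the interior
determines the domain. -/
theorem domain_eq_union_balls_of_interior (T : Set (ℤ × ℤ)) (hT : IsDomain tri T) :
    T = ⋃ q ∈ interiorSet tri T, ball1 tri q := by
  ext p
  simp only [Set.mem_iUnion, ball1, Set.mem_insert_iff, SimpleGraph.mem_neighborSet]
  constructor
  · intro hp
    rcases hT.2.1 p hp with hint | ⟨_, _, q, hadj, hq⟩
    · exact ⟨p, hint, Or.inl rfl⟩
    · exact ⟨q, hq, Or.inr hadj.symm⟩
  · rintro ⟨q, hq, rfl | hadj⟩
    · exact hq.1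
    · exact hq.2 p hadj

end TriGB
end

section
/- Curvature is local: let G₁ and G₂ be two domains in the triangular lattice X, let p be a vertex of both, and suppose the balls of radius 2 around p satisfy B₂(p) ∩ G₁ = B₂(p) ∩ G₂ (as subgraphs, denoted U₁ = U₂). Set Hᵢ = Gᵢ \ {p}. Then the change in total curvature caused by removing p is the same in both domains: (Σ_{q ∈ H₁} K(q)) − (Σ_{q ∈ H₂} K(q)) = (Σ_{q ∈ G₁} K(q)) − (Σ_{q ∈ G₂} K(q)). -/
/-!
Common framework: subgraphs of an ambient simple graph are modelled as vertex sets
with the induced graph structure (this captures condition (iv): domains are induced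
subgraphs). Spheres, curvature, interior/boundary points, domains, smooth domains,
simple connectivity, Euler characteristic, and the triangular lattice `tri`.
-/

namespace TriGB

variable {V : Type*}

/-! ### Auxiliary lemmas for locality of curvature -/

section Locality

variable (G : SimpleGraph V)

lemma restrict_adj_mono {T T' : Set V} (h : T ⊆ T') {a b : V}
    (hab : (restrict G T).Adj a b) : (restrict G T').Adj a b :=
  ⟨h hab.1, h hab.2.1, hab.2.2⟩

lemma mem_sphVerts_one {T : Set V} {q a : V} :
    a ∈ sphVerts G T q 1 ↔ (restrict G T).Adj q a := by
  constructor
  · rintro ⟨haT, hr, hd⟩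
    exact SimpleGraph.dist_eq_one_iff_adj.mp hd
  · intro h
    exact ⟨h.2.1, h.reachable, SimpleGraph.dist_eq_one_iff_adj.mpr h⟩

lemma mem_sphVerts_two {T : Set V} {q a : V} :
    a ∈ sphVerts G T q 2 ↔ a ∈ T ∧ a ≠ q ∧ ¬ (restrict G T).Adj q a ∧
      ∃ w, (restrict G T).Adj q w ∧ (restrict G T).Adj w a := by
  constructor
  · rintro ⟨haT, hr, hd⟩
    have hne : a ≠ q := by
      rintro rfl
      rw [SimpleGraph.dist_self] at hd; omega
    have hnadj : ¬ (restrict G T).Adj q a := fun h => by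
      rw [SimpleGraph.dist_eq_one_iff_adj.mpr h] at hd; omega
    obtain ⟨w, hw⟩ := hr.exists_walk_length_eq_dist
    rw [hd] at hw
    refine ⟨haT, hne, hnadj, ?_⟩
    cases w with
    | nil => simp at hw
    | cons h₁ w' =>
      cases w' with
      | nil => simp at hw
      | cons h₂ w'' =>
        cases w'' with
        | nil => exact ⟨_, h₁, h₂⟩
        | cons h₃ w''' => simp [SimpleGraph.Walk.length_cons] at hw
  · rintro ⟨haT, hne, hnadj, w, hw1, hw2⟩
    have hr : (restrict G T).Reachable q a := (hw1.reachable).trans hw2.reachable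
    refine ⟨haT, hr, ?_⟩
    have hle : (restrict G T).dist q a ≤ 2 := by
      have := SimpleGraph.dist_le ((hw1.toWalk).append hw2.toWalk)
      simpa using this
    have h0 : (restrict G T).dist q a ≠ 0 := by
      intro h
      rcases SimpleGraph.dist_eq_zero_iff_eq_or_not_reachable.mp h with h' | h'
      · exact hne h'.symm
      · exact h' hr
    have h1 : (restrict G T).dist q a ≠ 1 := fun h =>
      hnadj (SimpleGraph.dist_eq_one_iff_adj.mp h)
    omega

lemma mem_ballVerts_two {T : Set V} {p a : V} :
    a ∈ ballVerts G T p 2 ↔ (a = p ∧ p ∈ T) ∨ (restrict G T).Adj p a ∨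
      ∃ w, (restrict G T).Adj p w ∧ (restrict G T).Adj w a := by
  constructor
  · rintro ⟨haT, hr, hd⟩
    obtain ⟨w, hw⟩ := hr.exists_walk_length_eq_dist
    have hlen : w.length ≤ 2 := le_trans (le_of_eq hw) hd
    cases w with
    | nil => exact Or.inl ⟨rfl, haT⟩
    | cons h₁ w' =>
      cases w' with
      | nil => exact Or.inr (Or.inl h₁)
      | cons h₂ w'' =>
        cases w'' with
        | nil => exact Or.inr (Or.inr ⟨_, h₁, h₂⟩)
        | cons h₃ w''' => simp [SimpleGraph.Walk.length_cons] at hlen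
  · rintro (⟨rfl, hpT⟩ | h | ⟨w, hw1, hw2⟩)
    · exact ⟨hpT, SimpleGraph.Reachable.refl _, by rw [SimpleGraph.dist_self]; omega⟩
    · refine ⟨h.2.1, h.reachable, ?_⟩
      have := SimpleGraph.dist_le h.toWalk
      simpa using le_trans this (by simp)
    · refine ⟨hw2.2.1, (hw1.reachable).trans hw2.reachable, ?_⟩
      have := SimpleGraph.dist_le ((hw1.toWalk).append hw2.toWalk)
      simpa using this

lemma ballVerts_subset {T : Set V} {p : V} : ballVerts G T p 2 ⊆ T := fun _ h => h.1

lemma self_mem_ballVerts {T : Set V} {p : V} (hp : p ∈ T) : p ∈ ballVerts G T p 2 :=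
  (mem_ballVerts_two G).mpr (Or.inl ⟨rfl, hp⟩)

lemma mem_ball_of_adj {T : Set V} {p v : V} (hp : p ∈ T) (hv : v ∈ T)
    (h : G.Adj p v) : v ∈ ballVerts G T p 2 :=
  (mem_ballVerts_two G).mpr (Or.inr (Or.inl ⟨hp, hv, h⟩))

lemma mem_ball_of_adj2 {T : Set V} {p w v : V} (hp : p ∈ T) (hw : w ∈ T) (hv : v ∈ T)
    (h1 : G.Adj p w) (h2 : G.Adj w v) : v ∈ ballVerts G T p 2 :=
  (mem_ballVerts_two G).mpr (Or.inr (Or.inr ⟨w, ⟨hp, hw, h1⟩, ⟨hw, hv, h2⟩⟩))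

/-- Pairs of adjacent vertices inside a set, as `Sym2` edges. -/
def pairSet (G : SimpleGraph V) (S : Set V) : Set (Sym2 V) :=
  {e | ∃ a b, e = s(a, b) ∧ a ∈ S ∧ b ∈ S ∧ G.Adj a b}

lemma sphEdges_eq_pairSet {T : Set V} {q : V} {r : ℕ} :
    sphEdges G T q r = pairSet G (sphVerts G T q r) := rfl

lemma mem_pairSet {S : Set V} {a b : V} :
    s(a, b) ∈ pairSet G S ↔ a ∈ S ∧ b ∈ S ∧ G.Adj a b := by
  constructor
  · rintro ⟨c, d, he, hc, hd, hcd⟩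
    rcases Sym2.eq_iff.mp he with ⟨rfl, rfl⟩ | ⟨rfl, rfl⟩
    exacts [⟨hc, hd, hcd⟩, ⟨hd, hc, hcd.symm⟩]
  · rintro ⟨ha, hb, hab⟩; exact ⟨a, b, rfl, ha, hb, hab⟩

lemma pairSet_mono {S S' : Set V} (h : S ⊆ S') : pairSet G S ⊆ pairSet G S' := by
  rintro e ⟨a, b, he, ha, hb, hab⟩; exact ⟨a, b, he, h ha, h hb, hab⟩

lemma pairSet_finite {S : Set V} (hS : S.Finite) : (pairSet G S).Finite := by
  apply ((hS.prod hS).image (fun x => s(x.1, x.2))).subset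
  rintro e ⟨a, b, rfl, ha, hb, _⟩
  exact ⟨(a, b), ⟨ha, hb⟩, rfl⟩

lemma sphVerts_subset {T : Set V} {q : V} {r : ℕ} : sphVerts G T q r ⊆ T := fun _ h => h.1

lemma curv_eq {T : Set V} {q : V} :
    curv G T q = 2 * ((pairSet G (sphVerts G T q 1)).ncard : ℤ) -
      ((pairSet G (sphVerts G T q 2)).ncard : ℤ) := rfl

lemma curv_congr {T T' : Set V} {q : V}
    (h1 : sphVerts G T q 1 = sphVerts G T' q 1)
    (h2 : sphVerts G T q 2 = sphVerts G T' q 2) :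
    curv G T q = curv G T' q := by
  rw [curv_eq, curv_eq, h1, h2]

end Locality
section Locality2

variable (G : SimpleGraph V)

/-- Far from `p`, removing `p` does not change the unit sphere. -/
lemma sphVerts_one_remove {T : Set V} {p q : V} (hp : p ∈ T) (hq : q ∈ T)
    (hqB : q ∉ ballVerts G T p 2) :
    sphVerts G (T \ {p}) q 1 = sphVerts G T q 1 := by
  have hqp : q ≠ p := by rintro rfl; exact hqB (self_mem_ballVerts G hp)
  ext a
  rw [mem_sphVerts_one, mem_sphVerts_one]
  constructor
  · rintro ⟨hq', ha', hadj⟩; exact ⟨hq'.1, ha'.1, hadj⟩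
  · rintro ⟨hq', ha', hadj⟩
    have hap : a ≠ p := by
      rintro rfl
      exact hqB (mem_ball_of_adj G hp hq' hadj.symm)
    exact ⟨⟨hq', hqp⟩, ⟨ha', hap⟩, hadj⟩

/-- Far from `p`, removing `p` does not change the sphere of radius 2. -/
lemma sphVerts_two_remove {T : Set V} {p q : V} (hp : p ∈ T) (hq : q ∈ T)
    (hqB : q ∉ ballVerts G T p 2) :
    sphVerts G (T \ {p}) q 2 = sphVerts G T q 2 := by
  have hqp : q ≠ p := by rintro rfl; exact hqB (self_mem_ballVerts G hp)
  ext a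
  rw [mem_sphVerts_two, mem_sphVerts_two]
  constructor
  · rintro ⟨haT', hne, hnadj', w, hw1, hw2⟩
    refine ⟨haT'.1, hne, ?_, w, restrict_adj_mono G Set.diff_subset hw1,
      restrict_adj_mono G Set.diff_subset hw2⟩
    intro h
    exact hnadj' ⟨⟨h.1, hqp⟩, ⟨h.2.1, haT'.2⟩, h.2.2⟩
  · rintro ⟨haT, hne, hnadj, w, hw1, hw2⟩
    have hap : a ≠ p := by
      rintro rfl
      exact hqB ((mem_ballVerts_two G).mpr (Or.inr (Or.inr ⟨w, hw2.symm, hw1.symm⟩)))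
    have hwp : w ≠ p := by
      rintro rfl
      exact hqB ((mem_ballVerts_two G).mpr (Or.inr (Or.inl hw1.symm)))
    exact ⟨⟨haT, hap⟩, hne, fun h => hnadj (restrict_adj_mono G Set.diff_subset h),
      w, ⟨⟨hw1.1, hqp⟩, ⟨hw1.2.1, hwp⟩, hw1.2.2⟩, ⟨⟨hw2.1, hwp⟩, ⟨hw2.2.1, hap⟩, hw2.2.2⟩⟩

lemma curv_remove_eq {T : Set V} {p q : V} (hp : p ∈ T) (hq : q ∈ T)
    (hqB : q ∉ ballVerts G T p 2) :
    curv G (T \ {p}) q = curv G T q :=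
  curv_congr G (sphVerts_one_remove G hp hq hqB) (sphVerts_two_remove G hp hq hqB)

/-- The unit sphere at the centre, described via the radius-2 ball. -/
lemma sphVerts_one_center {T : Set V} {p : V} (hp : p ∈ T) :
    sphVerts G T p 1 = {a | a ∈ ballVerts G T p 2 ∧ G.Adj p a} := by
  ext a
  rw [mem_sphVerts_one]
  constructor
  · intro h
    exact ⟨mem_ball_of_adj G hp h.2.1 h.2.2, h.2.2⟩
  · rintro ⟨haB, hadj⟩
    exact ⟨hp, ballVerts_subset G haB, hadj⟩

/-- The sphere of radius 2 at the centre, described via the radius-2 ball. -/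
lemma sphVerts_two_center {T : Set V} {p : V} (hp : p ∈ T) :
    sphVerts G T p 2 = {a | a ∈ ballVerts G T p 2 ∧ a ≠ p ∧ ¬ G.Adj p a ∧
      ∃ w ∈ ballVerts G T p 2, G.Adj p w ∧ G.Adj w a} := by
  ext a
  rw [mem_sphVerts_two]
  constructor
  · rintro ⟨haT, hne, hnadj, w, hw1, hw2⟩
    refine ⟨(mem_ballVerts_two G).mpr (Or.inr (Or.inr ⟨w, hw1, hw2⟩)), fun h => hne h,
      fun h => hnadj ⟨hp, haT, h⟩, w, mem_ball_of_adj G hp hw1.2.1 hw1.2.2,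
      hw1.2.2, hw2.2.2⟩
  · rintro ⟨haB, hne, hnadj, w, hwB, hpw, hwa⟩
    exact ⟨ballVerts_subset G haB, fun h => hne h, fun h => hnadj h.2.2,
      w, ⟨hp, ballVerts_subset G hwB, hpw⟩,
      ⟨ballVerts_subset G hwB, ballVerts_subset G haB, hwa⟩⟩

end Locality2
section Locality3

variable (G : SimpleGraph V)

/-- Edges of the unit sphere of `q` destroyed by removing `p`, described via the ball `B`. -/
def del1 (G : SimpleGraph V) (B : Set V) (p q : V) : Set (Sym2 V) :=
  {e | ∃ b, e = s(p, b) ∧ G.Adj q p ∧ b ∈ B ∧ G.Adj q b ∧ G.Adj p b}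

/-- `a` is a vertex of `S₂(q)` destroyed by removing `p`, described via the ball `B`. -/
def dropP (G : SimpleGraph V) (B : Set V) (p q a : V) : Prop :=
  a = p ∨ (G.Adj q p ∧ G.Adj p a ∧ ∀ w ∈ B, G.Adj q w → G.Adj w a → w = p)

/-- `a ∈ S₂(q)`, described via the ball `B`. -/
def inS2 (G : SimpleGraph V) (B : Set V) (q a : V) : Prop :=
  a ∈ B ∧ a ≠ q ∧ ¬ G.Adj q a ∧ ∃ w ∈ B, G.Adj q w ∧ G.Adj w a

/-- Edges of the radius-2 sphere of `q` destroyed by removing `p`. -/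
def del2 (G : SimpleGraph V) (B : Set V) (p q : V) : Set (Sym2 V) :=
  {e | ∃ a b, e = s(a, b) ∧ G.Adj a b ∧ dropP G B p q a ∧ inS2 G B q a ∧ inS2 G B q b}

variable {T : Set V} {p q : V}

lemma sphVerts_one_remove_subset :
    sphVerts G (T \ {p}) q 1 ⊆ sphVerts G T q 1 := by
  intro a ha
  rw [mem_sphVerts_one] at ha ⊢
  exact restrict_adj_mono G Set.diff_subset ha

lemma sphVerts_two_remove_subset :
    sphVerts G (T \ {p}) q 2 ⊆ sphVerts G T q 2 := by
  intro a ha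
  rw [mem_sphVerts_two] at ha ⊢
  obtain ⟨haT, hne, hnadj, w, hw1, hw2⟩ := ha
  exact ⟨haT.1, hne, fun h => hnadj ⟨⟨h.1, hw1.1.2⟩, ⟨h.2.1, haT.2⟩, h.2.2⟩,
    w, restrict_adj_mono G Set.diff_subset hw1, restrict_adj_mono G Set.diff_subset hw2⟩

lemma mem_of_inS2 (hqT : q ∈ T) {a : V} (h : inS2 G (ballVerts G T p 2) q a) :
    a ∈ sphVerts G T q 2 := by
  obtain ⟨haB, hne, hnadj, w, hwB, hqw, hwa⟩ := h
  exact (mem_sphVerts_two G).mpr ⟨ballVerts_subset G haB, hne, fun h => hnadj h.2.2,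
    w, ⟨hqT, ballVerts_subset G hwB, hqw⟩,
    ⟨ballVerts_subset G hwB, ballVerts_subset G haB, hwa⟩⟩

/-- A vertex of `S₂(q;T)` equal or adjacent to `p` satisfies the `B`-version of
membership in `S₂`. -/
lemma inS2_of_mem (hp : p ∈ T) {a : V} (ha2 : a ∈ sphVerts G T q 2)
    (hside : a = p ∨ G.Adj p a) : inS2 G (ballVerts G T p 2) q a := by
  obtain ⟨haT, hne, hnadj, w, hw1, hw2⟩ := (mem_sphVerts_two G).mp ha2
  have hwB : w ∈ ballVerts G T p 2 := by
    rcases hside with rfl | hpa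
    · exact mem_ball_of_adj G hp hw1.2.1 hw2.2.2.symm
    · exact mem_ball_of_adj2 G hp haT hw1.2.1 hpa hw2.2.2.symm
  have haB : a ∈ ballVerts G T p 2 := by
    rcases hside with rfl | hpa
    · exact self_mem_ballVerts G hp
    · exact mem_ball_of_adj G hp haT hpa
  exact ⟨haB, hne, fun h => hnadj ⟨hw1.1, haT, h⟩, w, hwB, hw1.2.2, hw2.2.2⟩

/-- When `q` is adjacent to `p`, any vertex of `S₂(q;T)` lying in the ball satisfies
the `B`-version of membership in `S₂`. -/
lemma inS2_of_mem' (hp : p ∈ T) (hqT : q ∈ T) (hqp : G.Adj q p) {a : V}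
    (ha2 : a ∈ sphVerts G T q 2) (haB : a ∈ ballVerts G T p 2) :
    inS2 G (ballVerts G T p 2) q a := by
  obtain ⟨haT, hne, hnadj, w, hw1, hw2⟩ := (mem_sphVerts_two G).mp ha2
  exact ⟨haB, hne, fun h => hnadj ⟨hw1.1, haT, h⟩,
    w, mem_ball_of_adj2 G hp hqT hw1.2.1 hqp.symm hw1.2.2, hw1.2.2, hw2.2.2⟩

/-- A vertex of `S₂(q;T)` adjacent to `p` satisfies the `B`-version of membership. -/
lemma inS2_of_mem'' (hp : p ∈ T) {b : V} (hpb : G.Adj p b)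
    (hb2 : b ∈ sphVerts G T q 2) : inS2 G (ballVerts G T p 2) q b := by
  obtain ⟨hbT, hne, hnadj, w, hw1, hw2⟩ := (mem_sphVerts_two G).mp hb2
  exact ⟨mem_ball_of_adj G hp hbT hpb, hne, fun h => hnadj ⟨hw1.1, hbT, h⟩,
    w, mem_ball_of_adj2 G hp hbT hw1.2.1 hpb hw2.2.2.symm, hw1.2.2, hw2.2.2⟩

/-- A vertex of `S₂(q;T)` which is destroyed by removing `p` drops in the `B`-sense,
and is `p` or adjacent to `p`. -/
lemma drop_of_not_mem (hp : p ∈ T) (hqT : q ∈ T) (hqp : q ≠ p) {a : V}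
    (ha : a ∈ sphVerts G T q 2) (hna : a ∉ sphVerts G (T \ {p}) q 2) :
    dropP G (ballVerts G T p 2) p q a ∧ (a = p ∨ G.Adj p a) := by
  obtain ⟨haT, hne, hnadj, w₀, hw₀1, hw₀2⟩ := (mem_sphVerts_two G).mp ha
  by_cases hap : a = p
  · exact ⟨Or.inl hap, Or.inl hap⟩
  · have hall : ∀ w, w ∈ T → G.Adj q w → G.Adj w a → w = p := by
      intro w hwT hqw hwa
      by_contra hwp
      exact hna ((mem_sphVerts_two G).mpr ⟨⟨haT, hap⟩, hne,
        fun h => hnadj ⟨hqT, haT, h.2.2⟩, w,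
        ⟨⟨hqT, hqp⟩, ⟨hwT, hwp⟩, hqw⟩, ⟨⟨hwT, hwp⟩, ⟨haT, hap⟩, hwa⟩⟩)
    have hw₀p : w₀ = p := hall w₀ hw₀1.2.1 hw₀1.2.2 hw₀2.2.2
    have hpa : G.Adj p a := hw₀p ▸ hw₀2.2.2
    have hqpadj : G.Adj q p := hw₀p ▸ hw₀1.2.2
    exact ⟨Or.inr ⟨hqpadj, hpa,
      fun w hwB hqw hwa => hall w (ballVerts_subset G hwB) hqw hwa⟩, Or.inr hpa⟩

/-- Conversely, a `B`-dropping vertex is not in `S₂(q; T \ {p})`. -/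
lemma not_mem_of_drop (hp : p ∈ T) (hqT : q ∈ T) {a : V}
    (hdrop : dropP G (ballVerts G T p 2) p q a) :
    a ∉ sphVerts G (T \ {p}) q 2 := by
  intro hmem
  obtain ⟨haT', hne, hnadj', w, hw1, hw2⟩ := (mem_sphVerts_two G).mp hmem
  rcases hdrop with rfl | ⟨hqp', hpa, hall⟩
  · exact haT'.2 rfl
  · have hwB : w ∈ ballVerts G T p 2 :=
      mem_ball_of_adj2 G hp hqT hw1.2.1.1 hqp'.symm hw1.2.2
    exact hw1.2.1.2 (hall w hwB hw1.2.2 hw2.2.2)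

end Locality3
section Locality4

variable (G : SimpleGraph V) {T : Set V} {p q : V}

lemma pairSet_diff_one (hp : p ∈ T) (hq : q ∈ ballVerts G T p 2) (hqp : q ≠ p) :
    pairSet G (sphVerts G T q 1) \ pairSet G (sphVerts G (T \ {p}) q 1)
      = del1 G (ballVerts G T p 2) p q := by
  have hqT : q ∈ T := ballVerts_subset G hq
  ext e
  constructor
  · rintro ⟨⟨a, b, rfl, ha, hb, hab⟩, hnot⟩
    have key : ∀ c, c ∈ sphVerts G T q 1 → c ≠ p → c ∈ sphVerts G (T \ {p}) q 1 := by
      intro c hc hcp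
      obtain ⟨h1, h2, h3⟩ := (mem_sphVerts_one G).mp hc
      exact (mem_sphVerts_one G).mpr ⟨⟨h1, hqp⟩, ⟨h2, hcp⟩, h3⟩
    have ha' := (mem_sphVerts_one G).mp ha
    have hb' := (mem_sphVerts_one G).mp hb
    by_cases hap : a = p
    · subst hap
      exact ⟨b, rfl, ha'.2.2, mem_ball_of_adj G hp hb'.2.1 hab, hb'.2.2, hab⟩
    · by_cases hbp : b = p
      · subst hbp
        exact ⟨a, Sym2.eq_swap, hb'.2.2, mem_ball_of_adj G hp ha'.2.1 hab.symm,
          ha'.2.2, hab.symm⟩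
      · exact absurd ⟨a, b, rfl, key a ha hap, key b hb hbp, hab⟩ hnot
  · rintro ⟨b, rfl, hqpadj, hbB, hqb, hpb⟩
    constructor
    · exact ⟨p, b, rfl, (mem_sphVerts_one G).mpr ⟨hqT, hp, hqpadj⟩,
        (mem_sphVerts_one G).mpr ⟨hqT, ballVerts_subset G hbB, hqb⟩, hpb⟩
    · rintro ⟨c, d, he, hc, hd, hcd⟩
      have hc' : c ≠ p := ((mem_sphVerts_one G).mp hc).2.1.2
      have hd' : d ≠ p := ((mem_sphVerts_one G).mp hd).2.1.2
      rcases Sym2.eq_iff.mp he with ⟨h1, _⟩ | ⟨h1, _⟩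
      exacts [hc' h1.symm, hd' h1.symm]

lemma pairSet_diff_two (hp : p ∈ T) (hq : q ∈ ballVerts G T p 2) (hqp : q ≠ p) :
    pairSet G (sphVerts G T q 2) \ pairSet G (sphVerts G (T \ {p}) q 2)
      = del2 G (ballVerts G T p 2) p q := by
  have hqT : q ∈ T := ballVerts_subset G hq
  ext e
  constructor
  · rintro ⟨⟨a, b, rfl, ha, hb, hab⟩, hnot⟩
    have hdrop : a ∉ sphVerts G (T \ {p}) q 2 ∨ b ∉ sphVerts G (T \ {p}) q 2 := by
      by_contra hcon
      push_neg at hcon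
      exact hnot ⟨a, b, rfl, hcon.1, hcon.2, hab⟩
    -- general claim, symmetric in the two endpoints
    have main : ∀ x y : V, G.Adj x y → x ∈ sphVerts G T q 2 → y ∈ sphVerts G T q 2 →
        x ∉ sphVerts G (T \ {p}) q 2 →
        s(x, y) ∈ del2 G (ballVerts G T p 2) p q := by
      intro x y hxy hx hy hnx
      obtain ⟨hdx, hside⟩ := drop_of_not_mem G hp hqT hqp hx hnx
      have hinx : inS2 G (ballVerts G T p 2) q x := inS2_of_mem G hp hx hside
      have hiny : inS2 G (ballVerts G T p 2) q y := by
        rcases hside with rfl | hpx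
        · exact inS2_of_mem'' G hp hxy hy
        · rcases hdx with rfl | ⟨hqpadj, _, _⟩
          · exact inS2_of_mem'' G hp hxy hy
          · have hyB : y ∈ ballVerts G T p 2 :=
              mem_ball_of_adj2 G hp (((mem_sphVerts_two G).mp hx).1)
                (((mem_sphVerts_two G).mp hy).1) hpx hxy
            exact inS2_of_mem' G hp hqT hqpadj hy hyB
      exact ⟨x, y, rfl, hxy, hdx, hinx, hiny⟩
    rcases hdrop with hna | hnb
    · exact main a b hab ha hb hna
    · rw [Sym2.eq_swap (a := a)]
      exact main b a hab.symm hb ha hnb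
  · rintro ⟨a, b, rfl, hab, hdrop, hina, hinb⟩
    refine ⟨(mem_pairSet G).mpr ⟨mem_of_inS2 G hqT hina, mem_of_inS2 G hqT hinb, hab⟩, ?_⟩
    intro hmem
    exact not_mem_of_drop G hp hqT hdrop ((mem_pairSet G).mp hmem).1

lemma curv_diff (hfT : T.Finite) (hp : p ∈ T) (hq : q ∈ ballVerts G T p 2) (hqp : q ≠ p) :
    curv G T q - curv G (T \ {p}) q
      = 2 * ((del1 G (ballVerts G T p 2) p q).ncard : ℤ)
        - ((del2 G (ballVerts G T p 2) p q).ncard : ℤ) := by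
  have h1sub : pairSet G (sphVerts G (T \ {p}) q 1) ⊆ pairSet G (sphVerts G T q 1) :=
    pairSet_mono G (sphVerts_one_remove_subset G)
  have h2sub : pairSet G (sphVerts G (T \ {p}) q 2) ⊆ pairSet G (sphVerts G T q 2) :=
    pairSet_mono G (sphVerts_two_remove_subset G)
  have hfin1 : (pairSet G (sphVerts G T q 1)).Finite :=
    pairSet_finite G (hfT.subset (sphVerts_subset G))
  have hfin2 : (pairSet G (sphVerts G T q 2)).Finite :=
    pairSet_finite G (hfT.subset (sphVerts_subset G))
  have e1 := Set.ncard_diff_add_ncard_of_subset h1sub hfin1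
  have e2 := Set.ncard_diff_add_ncard_of_subset h2sub hfin2
  rw [pairSet_diff_one G hp hq hqp] at e1
  rw [pairSet_diff_two G hp hq hqp] at e2
  have e1' := congrArg (Nat.cast : ℕ → ℤ) e1
  have e2' := congrArg (Nat.cast : ℕ → ℤ) e2
  push_cast at e1' e2'
  rw [curv_eq, curv_eq]
  linarith

end Locality4
section Locality5

variable (G : SimpleGraph V) {T : Set V} {p : V}

lemma total_split (hfT : T.Finite) (hp : p ∈ T) :
    (∑ᶠ q ∈ T, curv G T q) - (∑ᶠ q ∈ T \ {p}, curv G (T \ {p}) q)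
      = curv G T p + ∑ᶠ q ∈ ballVerts G T p 2 \ {p},
          (curv G T q - curv G (T \ {p}) q) := by
  set B := ballVerts G T p 2 with hBdef
  have hBT : B ⊆ T := ballVerts_subset G
  have hBfin : B.Finite := hfT.subset hBT
  have hpB : p ∈ B := self_mem_ballVerts G hp
  have hdisj : Disjoint B (T \ B) := Set.disjoint_sdiff_right
  have h1 : ∑ᶠ q ∈ B ∪ (T \ B), curv G T q
      = (∑ᶠ q ∈ B, curv G T q) + ∑ᶠ q ∈ T \ B, curv G T q :=
    finsum_mem_union hdisj hBfin hfT.diff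
  rw [Set.union_diff_cancel hBT] at h1
  have hT' : (B \ {p}) ∪ (T \ B) = T \ {p} := by
    ext a
    simp only [Set.mem_union, Set.mem_diff, Set.mem_singleton_iff]
    constructor
    · rintro (⟨⟨haB, hap⟩⟩ | ⟨haT, haB⟩)
      · exact ⟨hBT haB, hap⟩
      · exact ⟨haT, fun h => haB (h ▸ hpB)⟩
    · rintro ⟨haT, hap⟩
      by_cases haB : a ∈ B
      · exact Or.inl ⟨haB, hap⟩
      · exact Or.inr ⟨haT, haB⟩
  have hdisj' : Disjoint (B \ {p}) (T \ B) := hdisj.mono_left Set.diff_subset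
  have h2 : ∑ᶠ q ∈ (B \ {p}) ∪ (T \ B), curv G (T \ {p}) q
      = (∑ᶠ q ∈ B \ {p}, curv G (T \ {p}) q) + ∑ᶠ q ∈ T \ B, curv G (T \ {p}) q :=
    finsum_mem_union hdisj' hBfin.diff hfT.diff
  rw [hT'] at h2
  have h3 : ∑ᶠ q ∈ T \ B, curv G (T \ {p}) q = ∑ᶠ q ∈ T \ B, curv G T q :=
    finsum_mem_congr rfl (fun q hq => curv_remove_eq G hp hq.1 hq.2)
  have h4 : ∑ᶠ q ∈ B, curv G T q
      = curv G T p + ∑ᶠ q ∈ B \ {p}, curv G T q := by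
    have hu : ({p} : Set V) ∪ (B \ {p}) = B :=
      Set.union_diff_cancel (Set.singleton_subset_iff.mpr hpB)
    have h4' : ∑ᶠ q ∈ ({p} : Set V) ∪ (B \ {p}), curv G T q
        = (∑ᶠ q ∈ ({p} : Set V), curv G T q) + ∑ᶠ q ∈ B \ {p}, curv G T q :=
      finsum_mem_union Set.disjoint_sdiff_right (Set.finite_singleton p) hBfin.diff
    rw [hu, finsum_mem_singleton] at h4'
    exact h4'
  have h5 : ∑ᶠ q ∈ B \ {p}, (curv G T q - curv G (T \ {p}) q)
      = (∑ᶠ q ∈ B \ {p}, curv G T q) - ∑ᶠ q ∈ B \ {p}, curv G (T \ {p}) q := by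
    have hf : (B \ {p}).Finite := hBfin.diff
    rw [show B \ {p} = (hf.toFinset : Set V) by simp]
    rw [finsum_mem_coe_finset, finsum_mem_coe_finset, finsum_mem_coe_finset,
      ← Finset.sum_sub_distrib]
  linarith

end Locality5

/-- curvature is local.  If two domains agree on the ball of radius `2`
around `p`, then removing `p` changes the total curvature by the same amount in both. -/
theorem curvature_is_local (G₁ G₂ : Set (ℤ × ℤ)) (hf₁ : G₁.Finite) (hf₂ : G₂.Finite)
    (h₁ : IsDomain tri G₁) (h₂ : IsDomain tri G₂) (p : ℤ × ℤ)
    (hp₁ : p ∈ G₁) (hp₂ : p ∈ G₂)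
    (hball : ballVerts tri G₁ p 2 = ballVerts tri G₂ p 2) :
    (∑ᶠ q ∈ G₁ \ {p}, curv tri (G₁ \ {p}) q) - (∑ᶠ q ∈ G₂ \ {p}, curv tri (G₂ \ {p}) q) =
      (∑ᶠ q ∈ G₁, curv tri G₁ q) - (∑ᶠ q ∈ G₂, curv tri G₂ q) := by
  have key1 := total_split tri hf₁ hp₁
  have key2 := total_split tri hf₂ hp₂
  have c1 : sphVerts tri G₁ p 1 = sphVerts tri G₂ p 1 := by
    rw [sphVerts_one_center tri hp₁, sphVerts_one_center tri hp₂, hball]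
  have c2 : sphVerts tri G₁ p 2 = sphVerts tri G₂ p 2 := by
    rw [sphVerts_two_center tri hp₁, sphVerts_two_center tri hp₂, hball]
  have hcp : curv tri G₁ p = curv tri G₂ p := curv_congr tri c1 c2
  have hΔ : ∀ q ∈ ballVerts tri G₁ p 2 \ {p},
      curv tri G₁ q - curv tri (G₁ \ {p}) q
        = curv tri G₂ q - curv tri (G₂ \ {p}) q := by
    intro q hq
    have hq2 : q ∈ ballVerts tri G₂ p 2 := hball ▸ hq.1
    rw [curv_diff tri hf₁ hp₁ hq.1 hq.2, curv_diff tri hf₂ hp₂ hq2 hq.2, hball]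
  have hsum : ∑ᶠ q ∈ ballVerts tri G₁ p 2 \ {p},
        (curv tri G₁ q - curv tri (G₁ \ {p}) q)
      = ∑ᶠ q ∈ ballVerts tri G₂ p 2 \ {p},
        (curv tri G₂ q - curv tri (G₂ \ {p}) q) := by
    rw [← hball] at *
    exact finsum_mem_congr rfl hΔ
  linarith

end TriGB
end

section
/- The number of interior points of a finite smooth domain G in the triangular lattice equals 2f − e + χ(G), where f is the number of triangular faces, e the number of edges, and χ(G) = v − e + f the Euler characteristic of G. -/
/-!
Common framework: subgraphs of an ambient simple graph are modelled as vertex sets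
with the induced graph structure (this captures condition (iv): domains are induced
subgraphs). Spheres, curvature, interior/boundary points, domains, smooth domains,
simple connectivity, Euler characteristic, and the triangular lattice `tri`.
-/

namespace TriGB

variable {V : Type*}

/-! ### Auxiliary development -/

def dd (i : ZMod 6) : ℤ × ℤ :=
  match i.val with
  | 0 => (1,0) | 1 => (0,1) | 2 => (-1,1) | 3 => (-1,0) | 4 => (0,-1) | _ => (1,-1)

lemma dd_inj : Function.Injective dd := by decide
lemma dd_add3 : ∀ i : ZMod 6, dd (i+3) = - dd i := by decide
lemma dd_ne_zero : ∀ i : ZMod 6, dd i ≠ 0 := by decide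
lemma dd_adj_iff : ∀ i j : ZMod 6, (∃ k, dd i - dd j = dd k) ↔ (j = i + 1 ∨ i = j + 1) := by decide
lemma dd_vals : ∀ i : ZMod 6, dd i = (1,0) ∨ dd i = (-1,0) ∨ dd i = (0,1) ∨ dd i = (0,-1) ∨ dd i = (1,-1) ∨ dd i = (-1,1) := by decide
lemma zmod_ne_add2 : ∀ j : ZMod 6, j ≠ j + 2 := by decide
lemma dd_step : ∀ d : ZMod 6, (∃ k, dd (d+1) - dd d = dd k) ∧ (∃ k, dd (d+2) - dd (d+3) = dd k) ∧ (∃ k, dd (d+1) - dd (d+2) = dd k) := by decide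

open Finset in
set_option maxRecDepth 10000 in
lemma cyc_lemma : ∀ S : Finset (ZMod 6), S.Nonempty → S ≠ univ →
    (∀ i ∈ S, i - 1 ∈ S ∨ i + 1 ∈ S) → (∀ d : ZMod 6, S ≠ univ \ {d, d+3}) →
    S.card = (S.filter (fun i => i + 1 ∈ S)).card + 1 := by decide

lemma mem_hexDirs_iff (x : ℤ × ℤ) : x ∈ hexDirs ↔ ∃ i, x = dd i := by
  constructor
  · intro h
    simp only [hexDirs, Set.mem_insert_iff, Set.mem_singleton_iff] at h
    rcases h with rfl|rfl|rfl|rfl|rfl|rfl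
    exacts [⟨0, by decide⟩, ⟨3, by decide⟩, ⟨1, by decide⟩, ⟨4, by decide⟩, ⟨5, by decide⟩, ⟨2, by decide⟩]
  · rintro ⟨i, rfl⟩
    simp only [hexDirs, Set.mem_insert_iff, Set.mem_singleton_iff]
    rcases dd_vals i with h|h|h|h|h|h <;> rw [h] <;> tauto

lemma tri_adj_iff (p q : ℤ × ℤ) : tri.Adj p q ↔ ∃ i, q = p + dd i := by
  show p - q ∈ hexDirs ↔ _
  rw [mem_hexDirs_iff]
  constructor
  · rintro ⟨i, h⟩
    exact ⟨i + 3, by rw [dd_add3, ← h]; ring⟩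
  · rintro ⟨i, rfl⟩
    exact ⟨i + 3, by rw [dd_add3]; ring⟩

lemma tri_adj_dd (p : ℤ × ℤ) (i : ZMod 6) : tri.Adj p (p + dd i) :=
  (tri_adj_iff p _).2 ⟨i, rfl⟩

lemma tri_adj_dd_iff (p : ℤ × ℤ) (i j : ZMod 6) :
    tri.Adj (p + dd i) (p + dd j) ↔ (j = i + 1 ∨ i = j + 1) := by
  show (p + dd i) - (p + dd j) ∈ hexDirs ↔ _
  rw [show (p + dd i) - (p + dd j) = dd i - dd j by ring, mem_hexDirs_iff]
  exact dd_adj_iff i j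

open Finset in
open scoped Classical in
/-- The index set of neighbours of `p` lying in `T`. -/
noncomputable def Nset (T : Set (ℤ × ℤ)) (p : ℤ × ℤ) : Finset (ZMod 6) :=
  Finset.univ.filter (fun i => p + dd i ∈ T)

open scoped Classical in
lemma mem_Nset {T : Set (ℤ × ℤ)} {p : ℤ × ℤ} {i : ZMod 6} :
    i ∈ Nset T p ↔ p + dd i ∈ T := by
  simp [Nset]

lemma pdd_inj (p : ℤ × ℤ) : Function.Injective (fun i => p + dd i) := by
  intro i j h
  exact dd_inj (by simpa using h)

lemma nbrs_eq_image (T : Set (ℤ × ℤ)) (p : ℤ × ℤ) :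
    nbrs tri T p = ↑((Nset T p).image (fun i => p + dd i)) := by
  ext q
  simp only [nbrs, Set.mem_setOf_eq, Finset.coe_image, Set.mem_image, Finset.mem_coe]
  constructor
  · rintro ⟨hq, hadj⟩
    obtain ⟨i, rfl⟩ := (tri_adj_iff p q).1 hadj
    exact ⟨i, mem_Nset.2 hq, rfl⟩
  · rintro ⟨i, hi, rfl⟩
    exact ⟨mem_Nset.1 hi, tri_adj_dd p i⟩

lemma ncard_nbrs (T : Set (ℤ × ℤ)) (p : ℤ × ℤ) :
    (nbrs tri T p).ncard = (Nset T p).card := by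
  rw [nbrs_eq_image, Set.ncard_coe_finset,
    Finset.card_image_of_injective _ (pdd_inj p)]

lemma sphEdges_eq_image (T : Set (ℤ × ℤ)) (p : ℤ × ℤ) :
    edgesOf tri (nbrs tri T p) =
      ↑(((Nset T p).filter (fun i => i + 1 ∈ Nset T p)).image
        (fun i => s(p + dd i, p + dd (i+1)))) := by
  ext e
  simp only [edgesOf, Set.mem_setOf_eq, Finset.coe_image, Set.mem_image, Finset.mem_coe,
    Finset.mem_filter]
  constructor
  · rintro ⟨a, b, rfl, ha, hb, hadj⟩
    rw [nbrs_eq_image] at ha hb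
    simp only [Finset.coe_image, Set.mem_image, Finset.mem_coe] at ha hb
    obtain ⟨i, hi, rfl⟩ := ha
    obtain ⟨j, hj, rfl⟩ := hb
    rcases (tri_adj_dd_iff p i j).1 hadj with rfl | rfl
    · exact ⟨i, ⟨hi, hj⟩, rfl⟩
    · exact ⟨j, ⟨hj, hi⟩, Sym2.eq_swap⟩
  · rintro ⟨i, ⟨hi, hi1⟩, rfl⟩
    refine ⟨p + dd i, p + dd (i+1), rfl, ?_, ?_, ?_⟩
    · rw [nbrs_eq_image]; exact Finset.mem_coe.2 (Finset.mem_image_of_mem _ hi)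
    · rw [nbrs_eq_image]; exact Finset.mem_coe.2 (Finset.mem_image_of_mem _ hi1)
    · exact (tri_adj_dd_iff p i (i+1)).2 (Or.inl rfl)

lemma edge_map_inj (p : ℤ × ℤ) :
    Function.Injective (fun i : ZMod 6 => s(p + dd i, p + dd (i+1))) := by
  intro i j h
  simp only [Sym2.eq, Sym2.rel_iff', Prod.mk.injEq, Prod.swap_prod_mk] at h
  rcases h with ⟨h1, h2⟩ | ⟨h1, h2⟩
  · exact pdd_inj p h1
  · have hij : i = j + 1 := pdd_inj p h1
    have hji : i + 1 = j := pdd_inj p h2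
    have h3 : j + 1 + 1 = j := by rw [← hij]; exact hji
    exact absurd (by linear_combination -h3) (zmod_ne_add2 j)

lemma ncard_sphEdges (T : Set (ℤ × ℤ)) (p : ℤ × ℤ) :
    (edgesOf tri (nbrs tri T p)).ncard =
      ((Nset T p).filter (fun i => i + 1 ∈ Nset T p)).card := by
  rw [sphEdges_eq_image, Set.ncard_coe_finset,
    Finset.card_image_of_injective _ (edge_map_inj p)]

lemma zmod_facts : ∀ d : ZMod 6, d+1 ≠ d ∧ d+1 ≠ d+3 ∧ d+2 ≠ d ∧ d+2 ≠ d+3 := by decide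

lemma Nset_card_univ : (Finset.univ : Finset (ZMod 6)).card = 6 := by decide

lemma interior_Nset {T : Set (ℤ × ℤ)} {p : ℤ × ℤ} (h : IsInteriorPt tri T p) :
    Nset T p = Finset.univ := by
  ext i
  simp only [Finset.mem_univ, iff_true, mem_Nset]
  exact h.2 _ (tri_adj_dd p i)

lemma mem_nbrs {T : Set (ℤ × ℤ)} {p q : ℤ × ℤ} : q ∈ nbrs tri T p ↔ q ∈ T ∧ tri.Adj p q :=
  Iff.rfl

lemma boundary_count {T : Set (ℤ × ℤ)} (hT : IsDomain tri T) {p : ℤ × ℤ}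
    (hp : IsBoundaryPt tri T p) :
    (Nset T p).card = ((Nset T p).filter (fun i => i + 1 ∈ Nset T p)).card + 1 := by
  apply cyc_lemma
  · -- Nonempty
    obtain ⟨q, hadj, hqi⟩ := hp.2.2
    obtain ⟨i, rfl⟩ := (tri_adj_iff p q).1 hadj
    exact ⟨i, mem_Nset.2 hqi.1⟩
  · -- not univ
    intro huniv
    apply hp.2.1
    refine ⟨hp.1, fun q hadj => ?_⟩
    obtain ⟨i, rfl⟩ := (tri_adj_iff p q).1 hadj
    exact mem_Nset.1 (huniv ▸ Finset.mem_univ i)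
  · -- no isolated points
    intro i hi
    have hq : (p + dd i) ∈ nbrs tri T p := ⟨mem_Nset.1 hi, tri_adj_dd p i⟩
    obtain ⟨r, hr⟩ := ((hT.1 p hp.1) _ hq).1
    obtain ⟨⟨hrT, hradj⟩, hqr⟩ := hr
    obtain ⟨j, rfl⟩ := (tri_adj_iff p r).1 hradj
    rcases (tri_adj_dd_iff p i j).1 hqr with rfl | hij
    · exact Or.inr (mem_Nset.2 hrT)
    · refine Or.inl (mem_Nset.2 ?_)
      have : i - 1 = j := by rw [hij]; ring
      rw [this]; exact hrT
  · -- not the antipodal pattern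
    intro d heq
    have hmem : ∀ i : ZMod 6, i ∈ Nset T p ↔ (i ≠ d ∧ i ≠ d + 3) := by
      intro i; rw [heq]; simp
    have hd0 : p + dd d ∉ T := fun h => ((hmem d).1 (mem_Nset.2 h)).1 rfl
    have hd3 : p + dd (d+3) ∉ T := fun h => ((hmem (d+3)).1 (mem_Nset.2 h)).2 rfl
    have h1 : p + dd (d+1) ∈ T :=
      mem_Nset.1 ((hmem (d+1)).2 ⟨(zmod_facts d).1, (zmod_facts d).2.1⟩)
    have h2 : p + dd (d+2) ∈ T :=
      mem_Nset.1 ((hmem (d+2)).2 ⟨(zmod_facts d).2.2.1, (zmod_facts d).2.2.2⟩)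
    have hb1 : IsBoundaryPt tri T (p + dd (d+1)) := by
      rcases hT.2.1 _ h1 with hint | hb
      · exact absurd (hint.2 (p + dd d) ((tri_adj_dd_iff p (d+1) d).2 (Or.inr rfl))) hd0
      · exact hb
    have hb2 : IsBoundaryPt tri T (p + dd (d+2)) := by
      rcases hT.2.1 _ h2 with hint | hb
      · exact absurd (hint.2 (p + dd (d+3)) ((tri_adj_dd_iff p (d+2) (d+3)).2 (Or.inl (by ring)))) hd3
      · exact hb
    have hone := hT.2.2.1 p hp
    refine (hone.2 (p + dd (d+1)) ⟨hb1, tri_adj_dd p (d+1)⟩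
      (p + dd (d+2)) ⟨hb2, tri_adj_dd p (d+2)⟩ ?_)
    exact (tri_adj_dd_iff p (d+1) (d+2)).2 (Or.inl (by ring))

open Finset in
lemma sum_deg (T : Set (ℤ × ℤ)) (Tf : Finset (ℤ × ℤ)) (hTf : ↑Tf = T) :
    ∑ p ∈ Tf, (Nset T p).card = 2 * (edgesOf tri T).ncard := by
  classical
  have hmemT : ∀ a : ℤ × ℤ, a ∈ Tf ↔ a ∈ T := fun a => by rw [← hTf]; exact Finset.mem_coe.symm
  set D := (Tf ×ˢ Tf).filter (fun x => tri.Adj x.1 x.2) with hD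
  have hmemD : ∀ x : (ℤ × ℤ) × (ℤ × ℤ), x ∈ D ↔ x.1 ∈ T ∧ x.2 ∈ T ∧ tri.Adj x.1 x.2 := by
    intro x
    rw [hD, Finset.mem_filter, Finset.mem_product, hmemT, hmemT, and_assoc]
  have step1 : D.card = ∑ p ∈ Tf, (Nset T p).card := by
    rw [Finset.card_eq_sum_card_fiberwise (f := fun x => x.1) (t := Tf)
      (fun x hx => (Finset.mem_product.1 (Finset.mem_filter.1 hx).1).1)]
    refine Finset.sum_congr rfl (fun p hp => ?_)
    have himg : D.filter (fun x => x.1 = p) = (Nset T p).image (fun i => (p, p + dd i)) := by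
      ext ⟨a, b⟩
      simp only [Finset.mem_filter, Finset.mem_image, hmemD, Prod.mk.injEq]
      constructor
      · rintro ⟨⟨haT, hbT, hadj⟩, rfl⟩
        obtain ⟨i, rfl⟩ := (tri_adj_iff a b).1 hadj
        exact ⟨i, mem_Nset.2 hbT, rfl, rfl⟩
      · rintro ⟨i, hi, rfl, rfl⟩
        exact ⟨⟨(hmemT p).1 hp, mem_Nset.1 hi, tri_adj_dd p i⟩, rfl⟩
    rw [himg, Finset.card_image_of_injective _ (fun i j h => pdd_inj p (congrArg Prod.snd h))]
  set Ef := D.image (fun x => s(x.1, x.2)) with hEf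
  have hedge : edgesOf tri T = ↑Ef := by
    ext e
    simp only [edgesOf, Set.mem_setOf_eq, hEf, Finset.coe_image, Set.mem_image, Finset.mem_coe]
    constructor
    · rintro ⟨a, b, rfl, ha, hb, hadj⟩
      exact ⟨(a, b), (hmemD _).2 ⟨ha, hb, hadj⟩, rfl⟩
    · rintro ⟨⟨a, b⟩, hx, rfl⟩
      obtain ⟨h1, h2, h3⟩ := (hmemD _).1 hx
      exact ⟨a, b, rfl, h1, h2, h3⟩
  have step3 : D.card = 2 * Ef.card := by
    rw [Finset.card_eq_sum_card_fiberwise (f := fun x => s(x.1, x.2)) (t := Ef)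
      (fun x hx => Finset.mem_image_of_mem _ hx)]
    have h2 : ∀ e ∈ Ef, (D.filter (fun x => s(x.1, x.2) = e)).card = 2 := by
      intro e he
      obtain ⟨⟨a, b⟩, hab, rfl⟩ := Finset.mem_image.1 he
      obtain ⟨haT, hbT, hadj⟩ := (hmemD _).1 hab
      have hne : a ≠ b := hadj.ne
      have hset : D.filter (fun x => s(x.1, x.2) = s(a, b)) = {(a, b), (b, a)} := by
        ext ⟨c, d⟩
        simp only [Finset.mem_filter, Finset.mem_insert, Finset.mem_singleton, hmemD,
          Sym2.eq, Sym2.rel_iff', Prod.mk.injEq, Prod.swap_prod_mk]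
        constructor
        · rintro ⟨-, (⟨rfl, rfl⟩ | ⟨rfl, rfl⟩)⟩
          · exact Or.inl ⟨rfl, rfl⟩
          · exact Or.inr ⟨rfl, rfl⟩
        · rintro (⟨rfl, rfl⟩ | ⟨rfl, rfl⟩)
          · exact ⟨⟨haT, hbT, hadj⟩, Or.inl ⟨rfl, rfl⟩⟩
          · exact ⟨⟨hbT, haT, hadj.symm⟩, Or.inr ⟨rfl, rfl⟩⟩
      rw [hset, Finset.card_insert_of_notMem (by
        simp only [Finset.mem_singleton, Prod.mk.injEq, not_and]
        intro h _
        exact hne h), Finset.card_singleton]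
    rw [Finset.sum_congr rfl h2, Finset.sum_const, smul_eq_mul, mul_comm]
  rw [hedge, Set.ncard_coe_finset, ← step3, step1]

lemma pdd_ne (p : ℤ × ℤ) (i : ZMod 6) : p + dd i ≠ p := fun h =>
  dd_ne_zero i (by simpa using h)

lemma zmod_succ_ne : ∀ i : ZMod 6, i ≠ i + 1 := by decide

open Finset in
lemma face_map_inj (p : ℤ × ℤ) {i j : ZMod 6}
    (h : ({p, p + dd i, p + dd (i+1)} : Finset (ℤ × ℤ)) = {p, p + dd j, p + dd (j+1)}) :
    i = j := by
  have h1 : p + dd i ∈ ({p, p + dd j, p + dd (j+1)} : Finset (ℤ × ℤ)) := by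
    rw [← h]; simp
  have h2 : p + dd (i+1) ∈ ({p, p + dd j, p + dd (j+1)} : Finset (ℤ × ℤ)) := by
    rw [← h]; simp
  simp only [Finset.mem_insert, Finset.mem_singleton] at h1 h2
  rcases h1 with h1 | h1 | h1
  · exact absurd h1 (pdd_ne p i)
  · exact pdd_inj p h1
  · -- i = j + 1
    have hij : i = j + 1 := pdd_inj p h1
    rcases h2 with h2 | h2 | h2
    · exact absurd h2 (pdd_ne p (i+1))
    · -- i + 1 = j
      have hji : i + 1 = j := pdd_inj p h2
      have h3 : j + 1 + 1 = j := by rw [← hij]; exact hji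
      exact absurd (by linear_combination -h3) (zmod_ne_add2 j)
    · exact add_right_cancel (pdd_inj p h2)

open Finset in
lemma sum_faces (T : Set (ℤ × ℤ)) (Tf : Finset (ℤ × ℤ)) (hTf : ↑Tf = T) :
    ∑ p ∈ Tf, ((Nset T p).filter (fun i => i + 1 ∈ Nset T p)).card
      = 3 * (facesOf tri T).ncard := by
  classical
  have hmemT : ∀ a : ℤ × ℤ, a ∈ Tf ↔ a ∈ T := fun a => by rw [← hTf]; exact Finset.mem_coe.symm
  set Ff := Tf.powerset.filter
    (fun t => t.card = 3 ∧ ∀ a ∈ t, ∀ b ∈ t, a ≠ b → tri.Adj a b) with hFf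
  have hmemF : ∀ t, t ∈ Ff ↔
      (t.card = 3 ∧ ↑t ⊆ T ∧ ∀ a ∈ t, ∀ b ∈ t, a ≠ b → tri.Adj a b) := by
    intro t
    rw [hFf, Finset.mem_filter, Finset.mem_powerset, ← hTf, ← Finset.coe_subset]
    tauto
  have hFace : facesOf tri T = ↑Ff := by
    ext t
    simp only [facesOf, Set.mem_setOf_eq, Finset.mem_coe, hmemF]
  have hfiber : ∀ p ∈ Tf, Ff.filter (fun t => p ∈ t)
      = ((Nset T p).filter (fun i => i + 1 ∈ Nset T p)).image
        (fun i => ({p, p + dd i, p + dd (i+1)} : Finset (ℤ × ℤ))) := by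
    intro p hp
    have hkey : ∀ (t : Finset (ℤ × ℤ)) (u v : ℤ × ℤ), t = {p, u, v} → t ∈ Ff → p ∈ t →
        p ≠ u → p ≠ v → u ≠ v →
        t ∈ ((Nset T p).filter (fun i => i + 1 ∈ Nset T p)).image
          (fun i => ({p, p + dd i, p + dd (i+1)} : Finset (ℤ × ℤ))) := by
      rintro t u v rfl ht hpt hpu hpv huv
      obtain ⟨hcard, hsub, hadj⟩ := (hmemF _).1 ht
      have hu : u ∈ ({p, u, v} : Finset (ℤ × ℤ)) := by simp
      have hv : v ∈ ({p, u, v} : Finset (ℤ × ℤ)) := by simp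
      have huT : u ∈ T := hsub hu
      have hvT : v ∈ T := hsub hv
      obtain ⟨i, rfl⟩ := (tri_adj_iff p u).1 (hadj p hpt u hu hpu)
      obtain ⟨j, rfl⟩ := (tri_adj_iff p v).1 (hadj p hpt v hv hpv)
      rcases (tri_adj_dd_iff p i j).1 (hadj _ hu _ hv huv) with rfl | hij
      · exact Finset.mem_image.2 ⟨i, Finset.mem_filter.2 ⟨mem_Nset.2 huT, mem_Nset.2 hvT⟩, rfl⟩
      · refine Finset.mem_image.2 ⟨j, Finset.mem_filter.2 ⟨mem_Nset.2 hvT, ?_⟩, ?_⟩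
        · rw [← hij]; exact mem_Nset.2 huT
        · rw [← hij]
          ext w
          simp only [Finset.mem_insert, Finset.mem_singleton]
          tauto
    ext t
    constructor
    · intro ht
      obtain ⟨htF, hpt⟩ := Finset.mem_filter.1 ht
      obtain ⟨hcard, hsub, hadj⟩ := (hmemF _).1 htF
      obtain ⟨x, y, z, hxy, hxz, hyz, rfl⟩ := Finset.card_eq_three.1 hcard
      simp only [Finset.mem_insert, Finset.mem_singleton] at hpt
      rcases hpt with rfl | rfl | rfl
      · exact hkey _ y z rfl htF (by simp) hxy hxz hyz
      · refine hkey _ x z ?_ htF (by simp) (Ne.symm hxy) hyz hxz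
        ext w; simp only [Finset.mem_insert, Finset.mem_singleton]; tauto
      · refine hkey _ x y ?_ htF (by simp) (Ne.symm hxz) (Ne.symm hyz) hxy
        ext w; simp only [Finset.mem_insert, Finset.mem_singleton]; tauto
    · intro ht
      obtain ⟨i, hi, rfl⟩ := Finset.mem_image.1 ht
      obtain ⟨hi1, hi2⟩ := Finset.mem_filter.1 hi
      have hne1 : p ≠ p + dd i := (pdd_ne p i).symm
      have hne2 : p ≠ p + dd (i+1) := (pdd_ne p (i+1)).symm
      have hne3 : p + dd i ≠ p + dd (i+1) := fun h => zmod_succ_ne i (pdd_inj p h)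
      refine Finset.mem_filter.2 ⟨(hmemF _).2 ⟨?_, ?_, ?_⟩, by simp⟩
      · rw [Finset.card_insert_of_notMem (by simp [hne1, hne2]),
          Finset.card_insert_of_notMem (by simp [hne3]), Finset.card_singleton]
      · intro w hw
        simp only [Finset.coe_insert, Set.mem_insert_iff, Finset.coe_singleton,
          Set.mem_singleton_iff] at hw
        rcases hw with rfl | rfl | rfl
        · exact (hmemT w).1 hp
        · exact mem_Nset.1 hi1
        · exact mem_Nset.1 hi2
      · intro a ha b hb hab
        simp only [Finset.mem_insert, Finset.mem_singleton] at ha hb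
        rcases ha with rfl | rfl | rfl <;> rcases hb with rfl | rfl | rfl <;>
          first
            | exact absurd rfl hab
            | exact tri_adj_dd _ _
            | exact (tri_adj_dd _ _).symm
            | exact (tri_adj_dd_iff _ _ _).2 (Or.inl rfl)
            | exact ((tri_adj_dd_iff _ _ _).2 (Or.inl rfl)).symm
  have hcards : ∀ p ∈ Tf, ((Nset T p).filter (fun i => i + 1 ∈ Nset T p)).card
      = (Ff.filter (fun t => p ∈ t)).card := by
    intro p hp
    rw [hfiber p hp, Finset.card_image_of_injOn (fun i _ j _ h => face_map_inj p h)]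
  calc ∑ p ∈ Tf, ((Nset T p).filter (fun i => i + 1 ∈ Nset T p)).card
      = ∑ p ∈ Tf, (Ff.filter (fun t => p ∈ t)).card := Finset.sum_congr rfl hcards
    _ = ∑ p ∈ Tf, ∑ t ∈ Ff, if p ∈ t then 1 else 0 := by
        refine Finset.sum_congr rfl (fun p _ => ?_)
        rw [Finset.card_filter]
    _ = ∑ t ∈ Ff, ∑ p ∈ Tf, if p ∈ t then 1 else 0 := Finset.sum_comm
    _ = ∑ t ∈ Ff, 3 := by
        refine Finset.sum_congr rfl (fun t ht => ?_)
        obtain ⟨hcard, hsub⟩ := Finset.mem_filter.1 ((hFf ▸ ht : t ∈ Tf.powerset.filter _))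
        rw [← Finset.card_filter]
        have : Tf.filter (fun p => p ∈ t) = t := by
          ext a
          simp only [Finset.mem_filter]
          exact ⟨fun h => h.2, fun h => ⟨Finset.mem_powerset.1 hcard h, h⟩⟩
        rw [this, hsub.1]
    _ = 3 * Ff.card := by rw [Finset.sum_const, smul_eq_mul, mul_comm]
  rw [hFace, Set.ncard_coe_finset]

/-- the number of interior points of a finite smooth domain equals
`2f - e + χ(G)`. -/
theorem interior_count (T : Set (ℤ × ℤ)) (hfin : T.Finite)
    (hsm : IsSmoothDomain tri T) :
    ((interiorSet tri T).ncard : ℤ) =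
      2 * ((facesOf tri T).ncard : ℤ) - ((edgesOf tri T).ncard : ℤ) + euler tri T := by
  classical
  obtain ⟨hT, -⟩ := hsm
  have hTf : ↑hfin.toFinset = T := hfin.coe_toFinset
  set Tf := hfin.toFinset with hTfdef
  have hmemT : ∀ a : ℤ × ℤ, a ∈ Tf ↔ a ∈ T := fun a => by rw [← hTf]; exact Finset.mem_coe.symm
  -- partition of T into interior and boundary
  have hI : interiorSet tri T ⊆ T := fun p h => h.1
  have hB : boundarySet tri T ⊆ T := fun p h => h.1
  have hIB : T = interiorSet tri T ∪ boundarySet tri T := by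
    ext p
    constructor
    · intro hp
      rcases hT.2.1 p hp with h | h
      exacts [Or.inl h, Or.inr h]
    · rintro (h | h)
      exacts [h.1, h.1]
  have hdisj : Disjoint (interiorSet tri T) (boundarySet tri T) := by
    rw [Set.disjoint_left]
    intro p hi hb
    exact hb.2.1 hi
  have hcard : T.ncard = (interiorSet tri T).ncard + (boundarySet tri T).ncard := by
    have h := Set.ncard_union_eq hdisj (hfin.subset hI) (hfin.subset hB)
    rw [← hIB] at h
    exact h
  -- pointwise defect
  have key : ∀ p ∈ Tf, ((Nset T p).card : ℤ)
      - (((Nset T p).filter (fun i => i + 1 ∈ Nset T p)).card : ℤ)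
      = if IsBoundaryPt tri T p then 1 else 0 := by
    intro p hp
    have hpT : p ∈ T := (hmemT p).1 hp
    rcases hT.2.1 p hpT with hint | hb
    · rw [if_neg (fun hb => hb.2.1 hint), interior_Nset hint,
        Finset.filter_true_of_mem (fun i _ => Finset.mem_univ _)]
      simp
    · rw [if_pos hb, boundary_count hT hb]
      push_cast
      ring
  -- boundary count
  have hbset : boundarySet tri T = ↑(Tf.filter (fun p => IsBoundaryPt tri T p)) := by
    ext p
    simp only [boundarySet, Set.mem_setOf_eq, Finset.coe_filter, hmemT]
    exact ⟨fun h => ⟨h.1, h⟩, fun h => h.2⟩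
  have hsum : (∑ p ∈ Tf, ((Nset T p).card : ℤ))
      - (∑ p ∈ Tf, (((Nset T p).filter (fun i => i + 1 ∈ Nset T p)).card : ℤ))
      = ((boundarySet tri T).ncard : ℤ) := by
    rw [← Finset.sum_sub_distrib, Finset.sum_congr rfl key, Finset.sum_boole,
      hbset, Set.ncard_coe_finset]
  have h1 : ∑ p ∈ Tf, (Nset T p).card = 2 * (edgesOf tri T).ncard := sum_deg T Tf hTf
  have h2 : ∑ p ∈ Tf, ((Nset T p).filter (fun i => i + 1 ∈ Nset T p)).card
      = 3 * (facesOf tri T).ncard := sum_faces T Tf hTf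
  have h1' : (∑ p ∈ Tf, ((Nset T p).card : ℤ)) = 2 * ((edgesOf tri T).ncard : ℤ) := by
    exact_mod_cast h1
  have h2' : (∑ p ∈ Tf, (((Nset T p).filter (fun i => i + 1 ∈ Nset T p)).card : ℤ))
      = 3 * ((facesOf tri T).ncard : ℤ) := by
    exact_mod_cast h2
  rw [h1', h2'] at hsum
  unfold euler
  push_cast at hcard ⊢
  linarith
end TriGB
end

section
/- Combinatorial Gauss–Bonnet, closed case: if G is a finite two-dimensional graph without boundary (every vertex's unit sphere is a simple closed one-dimensional graph, i.e. a cycle), then Σ_{g ∈ G} (6 − |S₁(g)|) = 6 χ(G), where |S₁(g)| is the number of edges of the unit sphere of g and χ(G) = v − e + f. -/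
/-!
Common framework: subgraphs of an ambient simple graph are modelled as vertex sets
with the induced graph structure (this captures condition (iv): domains are induced
subgraphs). Spheres, curvature, interior/boundary points, domains, smooth domains,
simple connectivity, Euler characteristic, and the triangular lattice `tri`.
-/

namespace TriGB

variable {V : Type*}

section GBAux

variable {W : Type*}

lemma aux_ncard_eq_toFinset_card (s : Set W) [Fintype s] : s.ncard = s.toFinset.card := by
  rw [Set.toFinset_card, ← Nat.card_eq_fintype_card, Nat.card_coe_set_eq]

lemma aux_edgesOf_eq_restrict_edgeSet (G : SimpleGraph W) (S : Set W) :
    edgesOf G S = (restrict G S).edgeSet := by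
  ext e
  induction e using Sym2.ind with
  | _ a b =>
    constructor
    · rintro ⟨x, y, hxy, hx, hy, hadj⟩
      rw [SimpleGraph.mem_edgeSet]
      rw [Sym2.eq_iff] at hxy
      rcases hxy with ⟨rfl, rfl⟩ | ⟨rfl, rfl⟩
      · exact ⟨hx, hy, hadj⟩
      · exact ⟨hy, hx, hadj.symm⟩
    · rintro ⟨ha, hb, hadj⟩
      exact ⟨a, b, rfl, ha, hb, hadj⟩

open Classical in
lemma aux_two_mul_edgesOf [Fintype W] (G : SimpleGraph W) (S : Set W)
    (h2 : ∀ q ∈ S, (nbrs G S q).ncard = 2) :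
    2 * (edgesOf G S).ncard = 2 * S.ncard := by
  classical
  have hdeg : ∀ q : W, (restrict G S).degree q = ((restrict G S).neighborSet q).ncard := by
    intro q
    rw [← SimpleGraph.card_neighborSet_eq_degree, ← Nat.card_eq_fintype_card,
      Nat.card_coe_set_eq]
  have hns : ∀ q : W, (restrict G S).neighborSet q = {r | q ∈ S ∧ r ∈ S ∧ G.Adj q r} := by
    intro q; rfl
  have hdeg2 : ∀ q : W, (restrict G S).degree q = if q ∈ S then 2 else 0 := by
    intro q
    rw [hdeg, hns]
    split_ifs with hq
    · rw [← h2 q hq]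
      congr 1
      ext r
      simp [nbrs, hq]
    · have : {r | q ∈ S ∧ r ∈ S ∧ G.Adj q r} = (∅ : Set W) := by
        ext r; simp [hq]
      rw [this, Set.ncard_empty]
  have hhand := (restrict G S).sum_degrees_eq_twice_card_edges
  have hedge : (edgesOf G S).ncard = (restrict G S).edgeFinset.card := by
    rw [aux_edgesOf_eq_restrict_edgeSet, SimpleGraph.edgeFinset,
      aux_ncard_eq_toFinset_card]
  have hFin : S.Finite := S.toFinite
  have hsum : ∑ q : W, (restrict G S).degree q = 2 * S.ncard := by
    simp_rw [hdeg2]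
    have hmem : ∀ q : W, (q ∈ S) = (q ∈ hFin.toFinset) := by
      intro q; exact (propext (hFin.mem_toFinset)).symm
    simp_rw [hmem]
    rw [Finset.sum_ite_mem, Finset.univ_inter, Finset.sum_const,
      Set.ncard_eq_toFinset_card _ hFin]
    ring
  rw [hedge, ← hhand, hsum]

open Classical in
lemma aux_sphereEdgeCount_eq_degree [Fintype W] (G : SimpleGraph W) (g : W)
    (h : IsCycleSet G (G.neighborSet g)) :
    sphereEdgeCount G g = G.degree g := by
  classical
  have h2 := aux_two_mul_edgesOf G (G.neighborSet g) h.2.2.2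
  have hdeg : G.degree g = (G.neighborSet g).ncard := by
    rw [← SimpleGraph.card_neighborSet_eq_degree, ← Nat.card_eq_fintype_card,
      Nat.card_coe_set_eq]
  rw [sphereEdgeCount, hdeg]
  omega

open Classical in
lemma aux_sphereEdgeCount_eq_faces_fiber [Fintype W] (G : SimpleGraph W) (g : W) :
    sphereEdgeCount G g = {t | t ∈ facesOf G Set.univ ∧ g ∈ t}.ncard := by
  classical
  set N := G.neighborSet g with hN
  set φ : Sym2 W → Finset W :=
    Sym2.lift ⟨fun a b => insert a (insert b {g}), fun a b => Finset.insert_comm a b {g}⟩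
    with hφ
  have hφmk : ∀ a b : W, φ s(a, b) = insert a (insert b {g}) := fun a b => rfl
  have himg : φ '' (edgesOf G N) = {t | t ∈ facesOf G Set.univ ∧ g ∈ t} := by
    ext t
    constructor
    · rintro ⟨e, ⟨a, b, rfl, ha, hb, hadj⟩, rfl⟩
      have hga : G.Adj g a := ha
      have hgb : G.Adj g b := hb
      have hab : a ≠ b := hadj.ne
      have hag : a ≠ g := hga.symm.ne
      have hbg : b ≠ g := hgb.symm.ne
      rw [hφmk]
      refine ⟨⟨?_, by simp, ?_⟩, by simp⟩
      · rw [Finset.card_eq_three]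
        exact ⟨a, b, g, hab, hag, hbg, rfl⟩
      · intro x hx y hy hxy
        simp only [Finset.mem_insert, Finset.mem_singleton] at hx hy
        rcases hx with rfl | rfl | rfl <;> rcases hy with rfl | rfl | rfl <;>
          first
          | exact absurd rfl hxy
          | exact hadj
          | exact hadj.symm
          | exact hga
          | exact hga.symm
          | exact hgb
          | exact hgb.symm
    · rintro ⟨⟨hcard, -, hmut⟩, hg⟩
      have hcard2 : (t.erase g).card = 2 := by
        rw [Finset.card_erase_of_mem hg, hcard]
      obtain ⟨a, b, hab, hab2⟩ := Finset.card_eq_two.mp hcard2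
      have hat : a ∈ t := Finset.mem_of_mem_erase (hab2 ▸ Finset.mem_insert_self a {b})
      have hbt : b ∈ t := Finset.mem_of_mem_erase
        (hab2 ▸ Finset.mem_insert_of_mem (Finset.mem_singleton_self b))
      have hag : a ≠ g := Finset.ne_of_mem_erase (hab2 ▸ Finset.mem_insert_self a {b})
      have hbg : b ≠ g := Finset.ne_of_mem_erase
        (hab2 ▸ Finset.mem_insert_of_mem (Finset.mem_singleton_self b))
      have hga : G.Adj g a := hmut g hg a hat (Ne.symm hag)
      have hgb : G.Adj g b := hmut g hg b hbt (Ne.symm hbg)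
      have hadj : G.Adj a b := hmut a hat b hbt hab
      refine ⟨s(a, b), ⟨a, b, rfl, hga, hgb, hadj⟩, ?_⟩
      rw [hφmk]
      have := Finset.insert_erase hg
      rw [← this, hab2]
      ext x
      simp only [Finset.mem_insert, Finset.mem_singleton]
      tauto
  have hinj : Set.InjOn φ (edgesOf G N) := by
    rintro e1 ⟨a, b, rfl, ha, hb, hab⟩ e2 ⟨c, d, rfl, hc, hd, hcd⟩ heq
    rw [hφmk, hφmk] at heq
    have hag : a ≠ g := (ha : G.Adj g a).ne'
    have hbg : b ≠ g := (hb : G.Adj g b).ne'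
    have hcg : c ≠ g := (hc : G.Adj g c).ne'
    have hdg : d ≠ g := (hd : G.Adj g d).ne'
    have hpair : ({a, b} : Finset W) = {c, d} := by
      have h1 : (insert a (insert b ({g} : Finset W))).erase g = {a, b} := by
        rw [Finset.erase_insert_of_ne hag, Finset.erase_insert_of_ne hbg,
          Finset.erase_singleton]
        rfl
      have h2 : (insert c (insert d ({g} : Finset W))).erase g = {c, d} := by
        rw [Finset.erase_insert_of_ne hcg, Finset.erase_insert_of_ne hdg,
          Finset.erase_singleton]
        rfl
      rw [← h1, ← h2, heq]
    have hamem : a ∈ ({c, d} : Finset W) := hpair ▸ Finset.mem_insert_self a {b}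
    have hbmem : b ∈ ({c, d} : Finset W) := hpair ▸
      Finset.mem_insert_of_mem (Finset.mem_singleton_self b)
    simp only [Finset.mem_insert, Finset.mem_singleton] at hamem hbmem
    rw [Sym2.eq_iff]
    rcases hamem with rfl | rfl
    · rcases hbmem with rfl | rfl
      · exact absurd rfl hab.ne
      · exact Or.inl ⟨rfl, rfl⟩
    · rcases hbmem with rfl | rfl
      · exact Or.inr ⟨rfl, rfl⟩
      · exact absurd rfl hab.ne
  rw [sphereEdgeCount, ← hN, ← Set.ncard_image_of_injOn hinj, himg]

lemma aux_sum_faces_fibers [Fintype W] (G : SimpleGraph W) :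
    ∑ g : W, {t | t ∈ facesOf G Set.univ ∧ g ∈ t}.ncard
      = 3 * (facesOf G Set.univ).ncard := by
  classical
  have hFin : (facesOf G Set.univ).Finite := Set.toFinite _
  set F := hFin.toFinset with hF
  have h1 : ∀ g : W, {t | t ∈ facesOf G Set.univ ∧ g ∈ t}.ncard
      = (F.filter (fun t => g ∈ t)).card := by
    intro g
    rw [← Set.ncard_coe_finset]
    congr 1
    ext t
    simp only [hF, Finset.coe_filter, Set.mem_setOf_eq, Set.Finite.mem_toFinset]
  simp_rw [h1, Finset.card_filter]
  rw [Finset.sum_comm]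
  have h2 : ∀ t ∈ F, (∑ g : W, if g ∈ t then 1 else 0) = 3 := by
    intro t ht
    have htf : t ∈ facesOf G Set.univ := hFin.mem_toFinset.mp ht
    calc (∑ g : W, if g ∈ t then 1 else 0) = (Finset.univ.filter (· ∈ t)).card := by
          rw [Finset.card_filter]
      _ = t.card := by rw [Finset.filter_univ_mem]
      _ = 3 := htf.1
  rw [Finset.sum_congr rfl h2, Finset.sum_const, Set.ncard_eq_toFinset_card _ hFin]
  ring

lemma aux_edgesOf_univ [Fintype W] (G : SimpleGraph W) :
    edgesOf G Set.univ = G.edgeSet := by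
  ext e
  induction e using Sym2.ind with
  | _ a b =>
    constructor
    · rintro ⟨x, y, hxy, -, -, hadj⟩
      rw [SimpleGraph.mem_edgeSet]
      rw [Sym2.eq_iff] at hxy
      rcases hxy with ⟨rfl, rfl⟩ | ⟨rfl, rfl⟩
      · exact hadj
      · exact hadj.symm
    · intro hadj
      exact ⟨a, b, rfl, trivial, trivial, hadj⟩

end GBAux

/-- combinatorial Gauss-Bonnet, closed case: if every unit sphere of a
finite graph is a cycle, then `Σ_g (6 - |S₁(g)|) = 6 χ(G)`, where `|S₁(g)|` is the
number of edges of the unit sphere of `g`. -/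
theorem combinatorial_gauss_bonnet_closed {W : Type*} [Fintype W] (G : SimpleGraph W)
    (h : ∀ p : W, IsCycleSet G (G.neighborSet p)) :
    ∑ g : W, ((6 : ℤ) - (sphereEdgeCount G g : ℤ)) = 6 * euler G Set.univ := by
  classical
  have hsum2 : ∑ g : W, sphereEdgeCount G g = 2 * (edgesOf G Set.univ).ncard := by
    have hdeg : ∀ g : W, sphereEdgeCount G g = G.degree g := fun g =>
      aux_sphereEdgeCount_eq_degree G g (h g)
    simp_rw [hdeg]
    rw [G.sum_degrees_eq_twice_card_edges, aux_edgesOf_univ, SimpleGraph.edgeFinset,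
      aux_ncard_eq_toFinset_card]
  have hsum3 : ∑ g : W, sphereEdgeCount G g = 3 * (facesOf G Set.univ).ncard := by
    simp_rw [fun g : W => aux_sphereEdgeCount_eq_faces_fiber G g]
    exact aux_sum_faces_fibers G
  have hv : (Set.univ : Set W).ncard = Fintype.card W := by
    rw [Set.ncard_univ, Nat.card_eq_fintype_card]
  rw [euler, hv]
  have hL : ∑ g : W, ((6 : ℤ) - (sphereEdgeCount G g : ℤ))
      = 6 * (Fintype.card W : ℤ) - ((∑ g : W, sphereEdgeCount G g : ℕ) : ℤ) := by
    rw [Finset.sum_sub_distrib, Finset.sum_const, Finset.card_univ, Nat.cast_sum]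
    ring
  rw [hL]
  have h2 : ((∑ g : W, sphereEdgeCount G g : ℕ) : ℤ)
      = 2 * ((edgesOf G Set.univ).ncard : ℤ) := by exact_mod_cast hsum2
  have h3 : ((∑ g : W, sphereEdgeCount G g : ℕ) : ℤ)
      = 3 * ((facesOf G Set.univ).ncard : ℤ) := by exact_mod_cast hsum3
  linarith

end TriGB
end
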